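/- Let e₁, …, eₙ be an orthonormal basis of V and let ω = Σᵢ γ(vᵢ)∘Bᵢ be a finite sum where vᵢ ∈ V and each Bᵢ is an endomorphism of E that anticommutes with γ(w) for every w ∈ V. Then (ε/4) Σₖ₌₁ⁿ ηₖ tr({γ(eₖ), ω}∘{γ(eₖ), ω}) = (n − 1) tr(ω∘ω), where {·,·} denotes the anticommutator. (This is the Clifford trace identity for the quantized one-form /α_YM = δ_γ(d_A μ_YM), responsible for the kinetic term of the Higgs field with its coefficient proportional to (n−1)³/n² in the Dirac action.) -/

import Mathlib

/-- Clifford trace identity for a quantized one-form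
`ω = Σᵢ γ(vᵢ)∘Bᵢ` with each `Bᵢ` anticommuting with the Clifford action:
`(ε/4) Σₖ ηₖ tr({γ(eₖ), ω}∘{γ(eₖ), ω}) = (n − 1) tr(ω∘ω)`. -/
theorem stmt_17 (V : Type*) [AddCommGroup V] [Module ℝ V]
    (E : Type*) [AddCommGroup E] [Module ℂ E] [FiniteDimensional ℂ E]
    (g : V → V → ℝ) (hg : ∀ v w : V, g v w = g w v)
    (hgadd : ∀ u v w : V, g (u + v) w = g u w + g v w)
    (hgsmul : ∀ (c : ℝ) (v w : V), g (c • v) w = c * g v w)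
    (ε : ℝ) (hε : ε = 1 ∨ ε = -1)
    (γ : V → Module.End ℂ E)
    (hγadd : ∀ v w : V, γ (v + w) = γ v + γ w)
    (hγsmul : ∀ (c : ℝ) (v : V), γ (c • v) = (c : ℂ) • γ v)
    (hcl : ∀ v w : V, γ v * γ w + γ w * γ v = ((2 * ε * g v w : ℝ) : ℂ) • 1)
    (n : ℕ) (e : Module.Basis (Fin n) ℝ V)
    (η : Fin n → ℝ) (hη : ∀ k, η k = 1 ∨ η k = -1)
    (horth : ∀ i j : Fin n, i ≠ j → g (e i) (e j) = 0)
    (hdiag : ∀ i : Fin n, g (e i) (e i) = η i)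
    (m : ℕ) (vs : Fin m → V) (B : Fin m → Module.End ℂ E)
    (hB : ∀ (i : Fin m) (w : V), B i * γ w + γ w * B i = 0)
    (ω : Module.End ℂ E)
    (hω : ω = ∑ i : Fin m, γ (vs i) * B i) :
    ((ε : ℂ) / 4) * ∑ k : Fin n, ((η k : ℝ) : ℂ) *
        LinearMap.trace ℂ E ((γ (e k) * ω + ω * γ (e k)) * (γ (e k) * ω + ω * γ (e k)))
      = ((n : ℂ) - 1) * LinearMap.trace ℂ E (ω * ω) := by
  have hε2 : (ε : ℂ) * (ε : ℂ) = 1 := by rcases hε with h | h <;> simp [h]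
  have hη2r : ∀ k, η k * η k = 1 := fun k => by rcases hη k with h | h <;> simp [h]
  have hη2c : ∀ k, ((η k : ℝ) : ℂ) * ((η k : ℝ) : ℂ) = 1 := fun k => by
    rw [← Complex.ofReal_mul, hη2r k, Complex.ofReal_one]
  -- the bilinear form as a bilinear map
  let G : V →ₗ[ℝ] V →ₗ[ℝ] ℝ := LinearMap.mk₂ ℝ g hgadd hgsmul
    (fun u v w => by rw [hg, hgadd, hg u v, hg u w])
    (fun c u v => by rw [hg, hgsmul, hg, smul_eq_mul])
  have hG : ∀ v w : V, G v w = g v w := fun v w => rfl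
  -- γ as an ℝ-linear map
  let Γ : V →ₗ[ℝ] Module.End ℂ E :=
    { toFun := γ, map_add' := hγadd,
      map_smul' := fun c v => by
        simp only [RingHom.id_apply]
        rw [hγsmul, Complex.coe_smul] }
  have hΓ : ∀ v : V, Γ v = γ v := fun v => rfl
  -- coordinates along the orthonormal basis
  have hrepr : ∀ (v : V) (j : Fin n), g (e j) v = e.repr v j * η j := by
    intro v j
    calc g (e j) v = G (e j) v := rfl
      _ = G (e j) (∑ k : Fin n, e.repr v k • e k) := by rw [e.sum_repr]
      _ = ∑ k : Fin n, e.repr v k • G (e j) (e k) := by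
          rw [map_sum]
          exact Finset.sum_congr rfl fun k _ => map_smul _ _ _
      _ = e.repr v j * η j := by
          rw [Finset.sum_eq_single j]
          · rw [hG, hdiag, smul_eq_mul]
          · intro k _ hk
            rw [hG, horth j k (Ne.symm hk), smul_zero]
          · simp
  -- expansion of γ v
  have hexp : ∀ v : V, γ v = ∑ k : Fin n, ((η k * g (e k) v : ℝ) : ℂ) • γ (e k) := by
    intro v
    have hv : v = ∑ k : Fin n, (η k * g (e k) v) • e k := by
      conv_lhs => rw [← e.sum_repr v]
      refine Finset.sum_congr rfl fun k _ => ?_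
      rw [hrepr v k]
      congr 1
      rw [mul_comm (e.repr v k) (η k), ← mul_assoc, hη2r k, one_mul]
    calc γ v = Γ v := rfl
      _ = ∑ k : Fin n, (η k * g (e k) v) • γ (e k) := by
          conv_lhs => rw [hv, map_sum]
          exact Finset.sum_congr rfl fun k _ => by rw [map_smul, hΓ]
      _ = ∑ k : Fin n, ((η k * g (e k) v : ℝ) : ℂ) • γ (e k) :=
          Finset.sum_congr rfl fun k _ => (Complex.coe_smul _ _).symm
  -- squares of the basis gammas
  have hsq : ∀ k : Fin n, γ (e k) * γ (e k) = ((ε * η k : ℝ) : ℂ) • 1 := by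
    intro k
    have h := hcl (e k) (e k)
    have h2 : (2 : ℂ) • (γ (e k) * γ (e k)) = (2 : ℂ) • (((ε * η k : ℝ) : ℂ) • 1) := by
      rw [two_smul, h, hdiag k, smul_smul]
      congr 1
      push_cast
      ring
    exact smul_right_injective (Module.End ℂ E) (by norm_num : (2 : ℂ) ≠ 0) h2
  -- key identity A: ∑ₖ ηₖ • cₖ (γ v) cₖ = ε(2-n) • γ v
  have keyA : ∀ v : V, ∑ k : Fin n, ((η k : ℝ) : ℂ) • (γ (e k) * γ v * γ (e k))
      = ((ε : ℂ) * (2 - (n : ℂ))) • γ v := by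
    intro v
    have step : ∀ k : Fin n, ((η k : ℝ) : ℂ) • (γ (e k) * γ v * γ (e k))
        = (2 * (ε : ℂ)) • (((η k * g (e k) v : ℝ) : ℂ) • γ (e k)) - (ε : ℂ) • γ v := by
      intro k
      have hc : γ (e k) * γ v = ((2 * ε * g (e k) v : ℝ) : ℂ) • 1 - γ v * γ (e k) := by
        rw [← hcl (e k) v]; abel
      rw [hc, sub_mul, smul_mul_assoc, one_mul, mul_assoc (γ v), hsq k, mul_smul_comm, mul_one]
      have h1 : ((η k : ℝ) : ℂ) * ((ε * η k : ℝ) : ℂ) = (ε : ℂ) := by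
        push_cast
        linear_combination (ε : ℂ) * hη2c k
      match_scalars
      · ring
      · push_cast at h1 ⊢; linear_combination -h1
    calc ∑ k : Fin n, ((η k : ℝ) : ℂ) • (γ (e k) * γ v * γ (e k))
        = ∑ k : Fin n, ((2 * (ε : ℂ)) • (((η k * g (e k) v : ℝ) : ℂ) • γ (e k)) - (ε : ℂ) • γ v) :=
          Finset.sum_congr rfl fun k _ => step k
      _ = (2 * (ε : ℂ)) • (∑ k : Fin n, ((η k * g (e k) v : ℝ) : ℂ) • γ (e k))
            - (n : ℂ) • ((ε : ℂ) • γ v) := by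
          rw [Finset.sum_sub_distrib, ← Finset.smul_sum, Finset.sum_const, Finset.card_univ,
            Fintype.card_fin, ← Nat.cast_smul_eq_nsmul ℂ]
      _ = ((ε : ℂ) * (2 - (n : ℂ))) • γ v := by
          rw [← hexp v]
          match_scalars
          ring
  -- key identity C: ∑ₖ ηₖ • cₖ ω cₖ = ε(n-2) • ω
  have keyC : ∑ k : Fin n, ((η k : ℝ) : ℂ) • (γ (e k) * ω * γ (e k))
      = ((ε : ℂ) * ((n : ℂ) - 2)) • ω := by
    have keyB : ∀ i : Fin m, ∑ k : Fin n, ((η k : ℝ) : ℂ) • (γ (e k) * (γ (vs i) * B i) * γ (e k))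
        = ((ε : ℂ) * ((n : ℂ) - 2)) • (γ (vs i) * B i) := by
      intro i
      have hBc : ∀ w : V, B i * γ w = -(γ w * B i) :=
        fun w => eq_neg_of_add_eq_zero_left (hB i w)
      have hterm : ∀ k : Fin n, γ (e k) * (γ (vs i) * B i) * γ (e k)
          = -((γ (e k) * γ (vs i) * γ (e k)) * B i) := by
        intro k
        have : γ (e k) * (γ (vs i) * B i) * γ (e k)
            = γ (e k) * γ (vs i) * (B i * γ (e k)) := by noncomm_ring
        rw [this, hBc (e k)]
        noncomm_ring
      calc ∑ k : Fin n, ((η k : ℝ) : ℂ) • (γ (e k) * (γ (vs i) * B i) * γ (e k))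
          = -((∑ k : Fin n, ((η k : ℝ) : ℂ) • (γ (e k) * γ (vs i) * γ (e k))) * B i) := by
            rw [Finset.sum_mul, ← Finset.sum_neg_distrib]
            exact Finset.sum_congr rfl fun k _ => by
              rw [hterm k, smul_neg, smul_mul_assoc]
        _ = ((ε : ℂ) * ((n : ℂ) - 2)) • (γ (vs i) * B i) := by
            rw [keyA (vs i), smul_mul_assoc, ← neg_smul]
            match_scalars
            ring
    rw [hω, Finset.smul_sum]
    calc ∑ k : Fin n, ((η k : ℝ) : ℂ) • ((γ (e k) * ∑ i : Fin m, γ (vs i) * B i) * γ (e k))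
        = ∑ k : Fin n, ∑ i : Fin m,
            ((η k : ℝ) : ℂ) • (γ (e k) * (γ (vs i) * B i) * γ (e k)) := by
          refine Finset.sum_congr rfl fun k _ => ?_
          rw [Finset.mul_sum, Finset.sum_mul, Finset.smul_sum]
      _ = ∑ i : Fin m, ∑ k : Fin n,
            ((η k : ℝ) : ℂ) • (γ (e k) * (γ (vs i) * B i) * γ (e k)) := Finset.sum_comm
      _ = ∑ i : Fin m, ((ε : ℂ) * ((n : ℂ) - 2)) • (γ (vs i) * B i) :=
          Finset.sum_congr rfl fun i _ => keyB i
  -- trace expansion of each anticommutator square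
  have htr : ∀ k : Fin n,
      LinearMap.trace ℂ E ((γ (e k) * ω + ω * γ (e k)) * (γ (e k) * ω + ω * γ (e k)))
        = 2 * LinearMap.trace ℂ E ((γ (e k) * ω * γ (e k)) * ω)
          + 2 * ((ε * η k : ℝ) : ℂ) * LinearMap.trace ℂ E (ω * ω) := by
    intro k
    set c := γ (e k) with hc
    have e1 : (c * ω + ω * c) * (c * ω + ω * c)
        = (c * ω * c) * ω + (c * (ω * ω)) * c + (ω * (c * c)) * ω + (ω * c * ω) * c := by
      noncomm_ring
    rw [e1, map_add, map_add, map_add,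
      LinearMap.trace_mul_comm ℂ (c * (ω * ω)) c,
      LinearMap.trace_mul_comm ℂ (ω * c * ω) c]
    have e2 : c * (c * (ω * ω)) = ((ε * η k : ℝ) : ℂ) • (ω * ω) := by
      rw [← mul_assoc, hsq k, smul_mul_assoc, one_mul]
    have e3 : ω * (c * c) * ω = ((ε * η k : ℝ) : ℂ) • (ω * ω) := by
      rw [hsq k, mul_smul_comm, mul_one, smul_mul_assoc]
    have e4 : c * (ω * c * ω) = (c * ω * c) * ω := by noncomm_ring
    rw [e2, e3, e4, map_smul, smul_eq_mul]
    ring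
  -- the weighted sum of mixed traces
  have hsum1 : ∑ k : Fin n, ((η k : ℝ) : ℂ) * LinearMap.trace ℂ E ((γ (e k) * ω * γ (e k)) * ω)
      = (ε : ℂ) * ((n : ℂ) - 2) * LinearMap.trace ℂ E (ω * ω) := by
    calc ∑ k : Fin n, ((η k : ℝ) : ℂ) * LinearMap.trace ℂ E ((γ (e k) * ω * γ (e k)) * ω)
        = LinearMap.trace ℂ E ((∑ k : Fin n, ((η k : ℝ) : ℂ) • (γ (e k) * ω * γ (e k))) * ω) := by
          rw [Finset.sum_mul, map_sum]
          exact Finset.sum_congr rfl fun k _ => by rw [smul_mul_assoc, map_smul, smul_eq_mul]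
      _ = (ε : ℂ) * ((n : ℂ) - 2) * LinearMap.trace ℂ E (ω * ω) := by
          rw [keyC, smul_mul_assoc, map_smul, smul_eq_mul]
  -- put everything together
  have hSig : ∑ k : Fin n, ((η k : ℝ) : ℂ) *
      LinearMap.trace ℂ E ((γ (e k) * ω + ω * γ (e k)) * (γ (e k) * ω + ω * γ (e k)))
      = 2 * ((ε : ℂ) * ((n : ℂ) - 2) * LinearMap.trace ℂ E (ω * ω))
        + 2 * (ε : ℂ) * (n : ℂ) * LinearMap.trace ℂ E (ω * ω) := by
    calc ∑ k : Fin n, ((η k : ℝ) : ℂ) *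
        LinearMap.trace ℂ E ((γ (e k) * ω + ω * γ (e k)) * (γ (e k) * ω + ω * γ (e k)))
        = ∑ k : Fin n, (2 * (((η k : ℝ) : ℂ) * LinearMap.trace ℂ E ((γ (e k) * ω * γ (e k)) * ω))
            + 2 * (ε : ℂ) * (((η k : ℝ) : ℂ) * ((η k : ℝ) : ℂ)) * LinearMap.trace ℂ E (ω * ω)) := by
          refine Finset.sum_congr rfl fun k _ => ?_
          rw [htr k]
          push_cast
          ring
      _ = 2 * ∑ k : Fin n, ((η k : ℝ) : ℂ) * LinearMap.trace ℂ E ((γ (e k) * ω * γ (e k)) * ω)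
            + ∑ k : Fin n, 2 * (ε : ℂ) * (((η k : ℝ) : ℂ) * ((η k : ℝ) : ℂ))
              * LinearMap.trace ℂ E (ω * ω) := by
          rw [Finset.sum_add_distrib, Finset.mul_sum]
      _ = 2 * ((ε : ℂ) * ((n : ℂ) - 2) * LinearMap.trace ℂ E (ω * ω))
            + 2 * (ε : ℂ) * (n : ℂ) * LinearMap.trace ℂ E (ω * ω) := by
          rw [hsum1]
          congr 1
          calc ∑ k : Fin n, 2 * (ε : ℂ) * (((η k : ℝ) : ℂ) * ((η k : ℝ) : ℂ))
                * LinearMap.trace ℂ E (ω * ω)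
              = ∑ k : Fin n, 2 * (ε : ℂ) * LinearMap.trace ℂ E (ω * ω) :=
                Finset.sum_congr rfl fun k _ => by rw [hη2c k, mul_one]
            _ = 2 * (ε : ℂ) * (n : ℂ) * LinearMap.trace ℂ E (ω * ω) := by
                rw [Finset.sum_const, Finset.card_univ, Fintype.card_fin, nsmul_eq_mul]
                ring
  rw [hSig]
  linear_combination ((n : ℂ) - 1) * LinearMap.trace ℂ E (ω * ω) * hε2
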